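/- Let n be an integer and fix real φ, respectively Θ. With q_n(Θ,φ) := sin Θ cos(nφ)·i + sin Θ sin(nφ)·j + cos Θ·k, the following derivative identities hold in the quaternions for all Θ, φ: (1) ∂q_n/∂Θ (Θ,φ) = q_n(Θ,φ)·a(φ) − a(φ)·q_n(Θ,φ), where a(φ) := (1/2)(sin(nφ)·i − cos(nφ)·j); and (2) ∂q_n/∂φ (Θ,φ) = (n/2)·(k·q_n(Θ,φ) − q_n(Θ,φ)·k). (These identities express that the covariant derivative of f·q_n with respect to the Charap–Duff connection equals df·q_n, i.e. that the Charap–Duff SU(2)-connection reduces to a U(1)-connection.) -/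

import Mathlib

open scoped Quaternion

def qi : ℍ[ℝ] := ⟨0, 1, 0, 0⟩
def qj : ℍ[ℝ] := ⟨0, 0, 1, 0⟩
def qk : ℍ[ℝ] := ⟨0, 0, 0, 1⟩

noncomputable def charapDuffQ (n : ℤ) (Θ φ : ℝ) : ℍ[ℝ] :=
  (Real.sin Θ * Real.cos (n * φ)) • qi + (Real.sin Θ * Real.sin (n * φ)) • qj
    + Real.cos Θ • qk

noncomputable def charapDuffA (n : ℤ) (φ : ℝ) : ℍ[ℝ] :=
  (2⁻¹ * Real.sin (n * φ)) • qi - (2⁻¹ * Real.cos (n * φ)) • qj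

@[simp] lemma qi_re : qi.re = 0 := rfl
@[simp] lemma qi_imI : qi.imI = 1 := rfl
@[simp] lemma qi_imJ : qi.imJ = 0 := rfl
@[simp] lemma qi_imK : qi.imK = 0 := rfl
@[simp] lemma qj_re : qj.re = 0 := rfl
@[simp] lemma qj_imI : qj.imI = 0 := rfl
@[simp] lemma qj_imJ : qj.imJ = 1 := rfl
@[simp] lemma qj_imK : qj.imK = 0 := rfl
@[simp] lemma qk_re : qk.re = 0 := rfl
@[simp] lemma qk_imI : qk.imI = 0 := rfl
@[simp] lemma qk_imJ : qk.imJ = 0 := rfl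
@[simp] lemma qk_imK : qk.imK = 1 := rfl

lemma commA (n : ℤ) (Θ φ : ℝ) :
    charapDuffQ n Θ φ * charapDuffA n φ - charapDuffA n φ * charapDuffQ n Θ φ =
      (Real.cos Θ * Real.cos (n * φ)) • qi + (Real.cos Θ * Real.sin (n * φ)) • qj
        + (-Real.sin Θ) • qk := by
  have h := Real.sin_sq_add_cos_sq (n * φ)
  ext <;> simp [charapDuffQ, charapDuffA] <;>
    first
    | ring1
    | linear_combination (-Real.sin Θ) * h

lemma commB (n : ℤ) (Θ φ : ℝ) :
    ((n : ℝ) / 2) • (qk * charapDuffQ n Θ φ - charapDuffQ n Θ φ * qk) =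
      (Real.sin Θ * (-(Real.sin (n * φ)) * n)) • qi
        + (Real.sin Θ * (Real.cos (n * φ) * n)) • qj := by
  ext <;> simp [charapDuffQ] <;> ring

/-- The derivatives of the Charap–Duff field `q_n` are commutators:
`∂q_n/∂Θ = q_n·a(φ) − a(φ)·q_n` with `a(φ) = (1/2)(sin(nφ)·i − cos(nφ)·j)`, and
`∂q_n/∂φ = (n/2)·(k·q_n − q_n·k)`.  (Hence the Charap–Duff `SU(2)`-connection reduces
to a `U(1)`-connection: `∇(f·q_n) = df·q_n`.) -/
theorem charap_duff_field_deriv (n : ℤ) (Θ φ : ℝ) :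
    HasDerivAt (fun t : ℝ => charapDuffQ n t φ)
      (charapDuffQ n Θ φ * charapDuffA n φ - charapDuffA n φ * charapDuffQ n Θ φ) Θ ∧
    HasDerivAt (fun t : ℝ => charapDuffQ n Θ t)
      (((n : ℝ) / 2) • (qk * charapDuffQ n Θ φ - charapDuffQ n Θ φ * qk)) φ := by
  constructor
  · rw [commA]
    unfold charapDuffQ
    exact ((((Real.hasDerivAt_sin Θ).mul_const _).smul_const qi).add
      (((Real.hasDerivAt_sin Θ).mul_const _).smul_const qj)).add
      (((Real.hasDerivAt_cos Θ)).smul_const qk) |>.congr_deriv (by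
        simp)
  · rw [commB]
    unfold charapDuffQ
    have hlin : HasDerivAt (fun t : ℝ => (n : ℝ) * t) (n : ℝ) φ := by
      simpa using (hasDerivAt_id φ).const_mul (n : ℝ)
    have hcos : HasDerivAt (fun t : ℝ => Real.cos ((n : ℝ) * t))
        (-(Real.sin ((n : ℝ) * φ)) * (n : ℝ)) φ :=
      (Real.hasDerivAt_cos ((n : ℝ) * φ)).comp φ hlin
    have hsin : HasDerivAt (fun t : ℝ => Real.sin ((n : ℝ) * t))
        (Real.cos ((n : ℝ) * φ) * (n : ℝ)) φ :=
      (Real.hasDerivAt_sin ((n : ℝ) * φ)).comp φ hlin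
    have := (((hcos.const_mul (Real.sin Θ)).smul_const qi).add
      ((hsin.const_mul (Real.sin Θ)).smul_const qj)).add
      ((hasDerivAt_const φ (Real.cos Θ)).smul_const qk)
    exact this.congr_deriv (by simp)
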